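/- If f is a morphism on finite words over {1,2,3} such that f(w) = w, where w is the Arshon sequence, then |f(1)| + |f(2)| + |f(3)| ≡ 0 (mod 3). -/

import Mathlib

open List Filter

/-- Image of a letter in an odd (1-based) position under ψ. -/
def oddBlock : ℕ → List ℕ
  | 1 => [1, 2, 3]
  | 2 => [2, 3, 1]
  | 3 => [3, 1, 2]
  | _ => []

/-- Image of a letter in an even (1-based) position under ψ. -/
def evenBlock : ℕ → List ℕ
  | 1 => [3, 2, 1]
  | 2 => [1, 3, 2]
  | 3 => [2, 1, 3]
  | _ => []

/-- The Arshon map ψ: replace the letter at each odd (1-based) position by its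
`oddBlock`, and the letter at each even position by its `evenBlock`. -/
def psi (l : List ℕ) : List ℕ :=
  (((List.range l.length).zip l).map fun p => if p.1 % 2 = 0 then oddBlock p.2 else evenBlock p.2).flatten

/-- The Arshon sequence `w = lim ψ^k(1)` as an infinite word: since
`|ψ^[n+1] [1]| = 3^(n+1) > n`, the `n`-th letter (0-based) is well defined. -/
def arshon (n : ℕ) : ℕ := (psi^[n + 1] [1]).getD n 0

/-- A word over the alphabet {1,2,3}. -/
def Word123 (l : List ℕ) : Prop := ∀ a ∈ l, a = 1 ∨ a = 2 ∨ a = 3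

/-- A morphism on finite words over {1,2,3}. -/
def IsMorphism123 (f : List ℕ → List ℕ) : Prop :=
  (∀ u v, f (u ++ v) = f u ++ f v) ∧ ∀ l, Word123 l → Word123 (f l)

/-- `f(w) = w` where `w` is the infinite Arshon word: the image of every finite
prefix of `w` is again a prefix of `w`, and these images have unbounded length
(so that `f(w)` is genuinely the infinite word `w`). -/
def FixesArshon (f : List ℕ → List ℕ) : Prop :=
  (∀ n, f ((List.range n).map arshon)
      = (List.range (f ((List.range n).map arshon)).length).map arshon) ∧
  Tendsto (fun n => (f ((List.range n).map arshon)).length) atTop atTop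

/-- The infinite word `s` is obtained by iterating the morphism `f` on the
letter 1: `f(1)` begins with 1, `|f^k(1)| → ∞`, and `s = lim f^k(1)`. -/
def IterLimit (f : List ℕ → List ℕ) (s : ℕ → ℕ) : Prop :=
  (∃ t, f [1] = 1 :: t) ∧
  Tendsto (fun k => (f^[k] [1]).length) atTop atTop ∧
  ∀ k n, n < (f^[k] [1]).length → (f^[k] [1]).getD n 0 = s n

def blk (k a : ℕ) : List ℕ := if k % 2 = 0 then oddBlock a else evenBlock a
def psiFrom : ℕ → List ℕ → List ℕ
  | _, [] => []
  | k, a :: l => blk k a ++ psiFrom (k + 1) l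

lemma psiFrom_eq (k : ℕ) (l : List ℕ) :
    (((List.range' k l.length).zip l).map fun p => blk p.1 p.2).flatten = psiFrom k l := by
  induction l generalizing k with
  | nil => rfl
  | cons a l ih => simp [List.range'_succ, psiFrom, ih]

lemma psi_eq (l : List ℕ) : psi l = psiFrom 0 l := by
  rw [← psiFrom_eq, ← List.range_eq_range']; rfl

lemma blk_length (k a : ℕ) (h : a = 1 ∨ a = 2 ∨ a = 3) : (blk k a).length = 3 := by
  rcases h with h | h | h <;> subst h <;> unfold blk oddBlock evenBlock <;> split <;> rfl

lemma blk_count (k a : ℕ) (h : a = 1 ∨ a = 2 ∨ a = 3) : (blk k a).count 1 = 1 := by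
  rcases h with h | h | h <;> subst h <;> unfold blk oddBlock evenBlock <;> split <;> rfl

lemma blk_word (k a : ℕ) (h : a = 1 ∨ a = 2 ∨ a = 3) : Word123 (blk k a) := by
  rcases h with h | h | h <;> subst h <;> unfold blk <;> split <;>
    intro x hx <;> simp [oddBlock, evenBlock] at hx <;> omega

lemma psiFrom_append (k : ℕ) (u v : List ℕ) :
    psiFrom k (u ++ v) = psiFrom k u ++ psiFrom (k + u.length) v := by
  induction u generalizing k with
  | nil => simp [psiFrom]
  | cons a u ih =>
      have h2 : k + (a :: u).length = (k + 1) + u.length := by simp [length_cons]; omega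
      simp only [cons_append, psiFrom, h2, append_assoc]
      rw [ih (k + 1)]

lemma psiFrom_word (k : ℕ) (l : List ℕ) (h : Word123 l) : Word123 (psiFrom k l) := by
  induction l generalizing k with
  | nil => intro a ha; simp [psiFrom] at ha
  | cons b l ih =>
      intro a ha
      simp only [psiFrom, mem_append] at ha
      rcases ha with ha | ha
      · exact blk_word k b (h b (by simp)) a ha
      · exact ih (k + 1) (fun x hx => h x (by simp [hx])) a ha

lemma psiFrom_length (k : ℕ) (l : List ℕ) (h : Word123 l) :
    (psiFrom k l).length = 3 * l.length := by
  induction l generalizing k with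
  | nil => rfl
  | cons b l ih =>
      simp only [psiFrom, length_append, blk_length k b (h b (by simp)),
        ih (k + 1) (fun x hx => h x (by simp [hx])), length_cons]
      ring

lemma iter_succ (m : ℕ) : psi^[m + 1] [1] = psi (psi^[m] [1]) :=
  Function.iterate_succ_apply' psi m [1]

lemma iter_word (m : ℕ) : Word123 (psi^[m] [1]) := by
  induction m with
  | zero => intro a ha; simp at ha; omega
  | succ m ih => rw [iter_succ, psi_eq]; exact psiFrom_word 0 _ ih

lemma iter_length (m : ℕ) : (psi^[m] [1]).length = 3 ^ m := by
  induction m with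
  | zero => rfl
  | succ m ih =>
      rw [iter_succ, psi_eq, psiFrom_length 0 _ (iter_word m), ih]; ring

lemma iter_prefix (m : ℕ) : ∃ t, psi^[m + 1] [1] = psi^[m] [1] ++ t := by
  induction m with
  | zero => exact ⟨[2, 3], by rfl⟩
  | succ m ih =>
      obtain ⟨t, ht⟩ := ih
      refine ⟨psiFrom (0 + (psi^[m] [1]).length) t, ?_⟩
      rw [iter_succ (m + 1), ht, psi_eq, psiFrom_append, ← psi_eq, ← iter_succ, ht]

lemma getD_stable (m j n : ℕ) (h : n < 3 ^ m) :
    (psi^[m + j] [1]).getD n 0 = (psi^[m] [1]).getD n 0 := by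
  induction j with
  | zero => rfl
  | succ j ih =>
      obtain ⟨t, ht⟩ := iter_prefix (m + j)
      have hlen : n < (psi^[m + j] [1]).length := by
        rw [iter_length]
        exact lt_of_lt_of_le h (Nat.pow_le_pow_right (by norm_num) (by omega))
      rw [show m + (j + 1) = (m + j) + 1 from rfl, ht, List.getD_append _ _ _ _ hlen, ih]

lemma arshon_eq (m n : ℕ) (hm : n < 3 ^ m) : arshon n = (psi^[m] [1]).getD n 0 := by
  unfold arshon
  rcases le_total m (n + 1) with h | h
  · obtain ⟨j, hj⟩ := Nat.exists_eq_add_of_le h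
    rw [hj]; exact getD_stable m j n hm
  · obtain ⟨j, hj⟩ := Nat.exists_eq_add_of_le h
    rw [hj]
    exact (getD_stable (n + 1) j n (lt_of_lt_of_le (Nat.lt_pow_self (n := n) (by norm_num : 1 < 3))
      (Nat.pow_le_pow_right (by norm_num) (by omega)))).symm

lemma prefix_take (N m : ℕ) (h : N ≤ 3 ^ m) :
    (List.range N).map arshon = (psi^[m] [1]).take N := by
  apply List.ext_getElem
  · simp [iter_length, h]
  · intro n h1 h2
    simp only [getElem_map, getElem_range, getElem_take]
    have hn : n < N := by simpa using h1
    rw [arshon_eq m n (lt_of_lt_of_le hn h),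
      List.getD_eq_getElem _ _ (by rw [iter_length]; exact lt_of_lt_of_le hn h)]

lemma count_take (l : List ℕ) (hl : Word123 l) :
    ∀ S k, S ≤ l.length → ((psiFrom k l).take (3 * S)).count 1 = S := by
  induction l with
  | nil => intro S k hS; simp at hS; simp [hS, psiFrom]
  | cons a l ih =>
      intro S k hS
      cases S with
      | zero => simp
      | succ S =>
          have hb : (blk k a).length = 3 := blk_length k a (hl a (by simp))
          have h3 : 3 * (S + 1) = (blk k a).length + 3 * S := by rw [hb]; ring
          rw [psiFrom, h3, List.take_length_add_append, count_append,
            blk_count k a (hl a (by simp)),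
            ih (fun x hx => hl x (by simp [hx])) S (k + 1) (by simpa using hS)]
          omega

/-- If `f` is a morphism on words over {1,2,3} with `f(w) = w` (`w` the Arshon
sequence), then `|f(1)| + |f(2)| + |f(3)| ≡ 0 (mod 3)`. -/
theorem arshon_fixing_morphism_length_sum_mod_three
    (f : List ℕ → List ℕ) (hf : IsMorphism123 f) (hfix : FixesArshon f) :
    ((f [1]).length + (f [2]).length + (f [3]).length) % 3 = 0 := by
  obtain ⟨hmor, -⟩ := hf
  obtain ⟨hpre, -⟩ := hfix
  set S := (f [1]).length + (f [2]).length + (f [3]).length with hSdef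
  have h9 : (List.range 9).map arshon = [1, 2, 3, 1, 3, 2, 3, 1, 2] := by
    rw [prefix_take 9 2 (by norm_num)]
    rfl
  have hdec : f ((List.range 9).map arshon)
      = f [1] ++ (f [2] ++ (f [3] ++ (f [1] ++ (f [3] ++ (f [2] ++
        (f [3] ++ (f [1] ++ f [2]))))))) := by
    rw [h9, show ([1, 2, 3, 1, 3, 2, 3, 1, 2] : List ℕ)
      = [1] ++ ([2] ++ ([3] ++ ([1] ++ ([3] ++ ([2] ++ ([3] ++ ([1] ++ [2])))))))
      from rfl]
    rw [hmor, hmor, hmor, hmor, hmor, hmor, hmor, hmor]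
  have hlen : (f ((List.range 9).map arshon)).length = 3 * S := by
    simp only [hdec, length_append]
    omega
  set c := (f [1]).count 1 + (f [2]).count 1 + (f [3]).count 1 with hc
  have hcnt : (f ((List.range 9).map arshon)).count 1 = 3 * c := by
    simp only [hdec, count_append]
    omega
  have key := hpre 9
  have hle : S ≤ 3 ^ (3 * S) :=
    le_trans (le_of_lt (Nat.lt_pow_self (n := S) (by norm_num : 1 < 3)))
      (Nat.pow_le_pow_right (by norm_num) (by omega))
  have hrhs : ((List.range (3 * S)).map arshon).count 1 = S := by
    have h1 : 3 * S ≤ 3 ^ (3 * S + 1) := by rw [pow_succ]; omega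
    rw [prefix_take (3 * S) (3 * S + 1) h1, iter_succ, psi_eq]
    exact count_take _ (iter_word _) S 0 (by rw [iter_length]; exact hle)
  have h2 : 3 * c = S := by
    have h := congrArg (List.count 1) key
    rw [hcnt, hlen, hrhs] at h
    exact h
  omega
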